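/- If the directed graph 𝒢_g (with vertex set B^N and an edge labeled m ∈ ⟦0, 2^N−1⟧ from x to x̌ iff g(m, x) = x̌) is strongly connected, then the map G_g is strongly transitive on (X, d): for all points (x,m), (x̌,m̌) ∈ X and all ε > 0, there exist n ∈ ℕ and a point (x', m') with d((x,m),(x',m')) < ε and G_g^n(x', m') = (x̌, m̌). -/

import Mathlib

def hamB {N : ℕ} (x y : Fin N → Bool) : ℕ :=
  (Finset.univ.filter fun i => x i ≠ y i).card

noncomputable def dE {N : ℕ} (x y : Fin N → Bool) : ℝ := hamB x y

noncomputable def dM {N : ℕ} (m m' : ℕ → Fin N → Bool) : ℝ :=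
  (9 / (N : ℝ)) * ∑' k : ℕ, (hamB (m k) (m' k) : ℝ) / 10 ^ (k + 1)

noncomputable def dX {N : ℕ} (p q : (Fin N → Bool) × (ℕ → Fin N → Bool)) : ℝ :=
  dE p.1 q.1 + dM p.2 q.2

def Gmap {N : ℕ} (g : (Fin N → Bool) → (Fin N → Bool) → (Fin N → Bool))
    (p : (Fin N → Bool) × (ℕ → Fin N → Bool)) : (Fin N → Bool) × (ℕ → Fin N → Bool) :=
  (g (p.2 0) p.1, fun k => p.2 (k + 1))


/-- End vertex of the path starting at `x` and following the edge labels in `L`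
in the graph `𝒢_g` (an edge labeled `m` goes from `v` to `g m v`). -/
def pathEnd {N : ℕ} (g : (Fin N → Bool) → (Fin N → Bool) → (Fin N → Bool))
    (x : Fin N → Bool) (L : List (Fin N → Bool)) : Fin N → Bool :=
  L.foldl (fun v m => g m v) x

lemma hamB_self {N : ℕ} (x : Fin N → Bool) : hamB x x = 0 := by
  simp [hamB]

lemma hamB_le {N : ℕ} (x y : Fin N → Bool) : hamB x y ≤ N := by
  have := Finset.card_filter_le (Finset.univ : Finset (Fin N)) (fun i => x i ≠ y i)
  simpa [hamB] using this

lemma iterate_Gmap {N : ℕ} (g : (Fin N → Bool) → (Fin N → Bool) → (Fin N → Bool)) :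
    ∀ (n : ℕ) (x : Fin N → Bool) (m : ℕ → Fin N → Bool),
      (Gmap g)^[n] (x, m) =
        (pathEnd g x (List.ofFn fun i : Fin n => m i), fun k => m (k + n)) := by
  intro n
  induction n with
  | zero => intro x m; simp [pathEnd]
  | succ n ih =>
    intro x m
    rw [Function.iterate_succ_apply]
    show (Gmap g)^[n] (g (m 0) x, fun k => m (k + 1)) = _
    rw [ih]
    refine Prod.ext ?_ ?_
    · show pathEnd g (g (m 0) x) _ = pathEnd g x _
      rw [List.ofFn_succ]
      rfl
    · funext k
      simp [add_assoc, add_comm 1 n]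

/-- if `𝒢_g` is strongly connected then `G_g` is strongly transitive on `(X,d)`. -/
theorem strongly_transitive_of_strongly_connected (N : ℕ) (hN : 1 ≤ N)
    (g : (Fin N → Bool) → (Fin N → Bool) → (Fin N → Bool))
    (hsc : ∀ x y : Fin N → Bool, ∃ L : List (Fin N → Bool), pathEnd g x L = y) :
    ∀ p q : (Fin N → Bool) × (ℕ → Fin N → Bool), ∀ ε > (0 : ℝ),
      ∃ n : ℕ, ∃ p', dX p p' < ε ∧ (Gmap g)^[n] p' = q := by
  intro p q ε hε
  obtain ⟨K, hK⟩ : ∃ K : ℕ, (1/10 : ℝ)^K < ε :=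
    exists_pow_lt_of_lt_one hε (by norm_num)
  obtain ⟨L, hL⟩ := hsc (pathEnd g p.1 (List.ofFn fun i : Fin K => p.2 i)) q.1
  set m' : ℕ → Fin N → Bool := fun k =>
    if h : k < K then p.2 k
    else if h2 : k - K < L.length then L.get ⟨k - K, h2⟩
    else q.2 (k - K - L.length) with hm'
  refine ⟨K + L.length, (p.1, m'), ?_, ?_⟩
  · -- distance bound
    have hNpos : (0:ℝ) < N := by exact_mod_cast hN
    have hgeo : Summable fun k : ℕ => (1/10 : ℝ)^(k+1) :=
      (summable_geometric_of_lt_one (by norm_num) (by norm_num)).comp_injective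
        (add_left_injective 1)
    have hle : ∀ k, (hamB (p.2 k) (m' k) : ℝ) / 10 ^ (k + 1)
        ≤ (N : ℝ) * (1/10)^(k+1) := by
      intro k
      rw [div_le_iff₀ (by positivity)]
      calc (hamB (p.2 k) (m' k) : ℝ) ≤ N := by exact_mod_cast hamB_le _ _
        _ = (N : ℝ) * (1/10)^(k+1) * 10^(k+1) := by
            rw [mul_assoc, ← mul_pow]; norm_num
    have hsum : Summable fun k : ℕ => (hamB (p.2 k) (m' k) : ℝ) / 10 ^ (k + 1) :=
      Summable.of_nonneg_of_le (fun k => by positivity) hle (hgeo.mul_left _)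
    have hzero : ∀ i < K, (hamB (p.2 i) (m' i) : ℝ) / 10 ^ (i + 1) = 0 := by
      intro i hi
      have hmi : m' i = p.2 i := by simp [hm', hi]
      simp [hmi, hamB_self]
    have htail : (∑' k : ℕ, (hamB (p.2 k) (m' k) : ℝ) / 10 ^ (k + 1))
        = ∑' k : ℕ, (hamB (p.2 (k+K)) (m' (k+K)) : ℝ) / 10 ^ (k + K + 1) := by
      rw [← Summable.sum_add_tsum_nat_add K hsum]
      rw [Finset.sum_eq_zero (fun i hi => hzero i (Finset.mem_range.mp hi)), zero_add]
    have htail_le : (∑' k : ℕ, (hamB (p.2 (k+K)) (m' (k+K)) : ℝ) / 10 ^ (k + K + 1))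
        ≤ ∑' k : ℕ, ((N:ℝ) * (1/10)^K) * (1/10)^(k+1) := by
      refine Summable.tsum_le_tsum ?_ (hsum.comp_injective (add_left_injective K))
        (hgeo.mul_left _)
      intro k
      rw [div_le_iff₀ (by positivity)]
      calc (hamB (p.2 (k+K)) (m' (k+K)) : ℝ) ≤ N := by exact_mod_cast hamB_le _ _
        _ = ((N:ℝ) * (1/10)^K) * (1/10)^(k+1) * 10^(k+K+1) := by
            field_simp
            ring_nf
            rw [mul_right_comm ((1/10:ℝ)^K), ← mul_pow, mul_assoc, ← mul_pow]
            norm_num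
    have hgs : (∑' k : ℕ, ((N:ℝ) * (1/10)^K) * (1/10)^(k+1))
        = (N:ℝ) * (1/10)^K * (1/9) := by
      rw [tsum_mul_left]
      congr 1
      have : ∀ k : ℕ, (1/10:ℝ)^(k+1) = (1/10)^k * (1/10) := fun k => pow_succ _ _
      rw [tsum_congr this, tsum_mul_right, tsum_geometric_of_lt_one (by norm_num) (by norm_num)]
      norm_num
    have hdM : dM p.2 m' ≤ (1/10:ℝ)^K := by
      have h1 : (∑' k : ℕ, (hamB (p.2 k) (m' k) : ℝ) / 10 ^ (k + 1))
          ≤ (N:ℝ) * (1/10)^K * (1/9) := by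
        rw [htail]; rw [← hgs]; exact htail_le
      rw [dM]
      have h9N : (0:ℝ) < 9 / N := by positivity
      calc (9 / (N:ℝ)) * _ ≤ (9 / (N:ℝ)) * ((N:ℝ) * (1/10)^K * (1/9)) :=
            mul_le_mul_of_nonneg_left h1 (le_of_lt h9N)
        _ = (1/10:ℝ)^K := by field_simp
    have hdE : dE p.1 p.1 = 0 := by simp [dE, hamB_self]
    calc dX p (p.1, m') = dE p.1 p.1 + dM p.2 m' := rfl
      _ = dM p.2 m' := by rw [hdE, zero_add]
      _ ≤ (1/10:ℝ)^K := hdM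
      _ < ε := hK
  · -- iterate hits q
    rw [show (p.1, m') = (p.1, m') from rfl, iterate_Gmap]
    have hlist : (List.ofFn fun i : Fin (K + L.length) => m' i)
        = (List.ofFn fun i : Fin K => p.2 i) ++ L := by
      rw [List.ofFn_add]
      congr 1
      · congr 1
        funext i
        simp [hm', i.isLt]
      · apply List.ext_getElem (by simp)
        intro i h1 h2
        rw [List.getElem_ofFn]
        show m' (K + i) = _
        simp only [hm']
        rw [dif_neg (by omega), dif_pos (by omega)]
        simp only [List.get_eq_getElem]
        congr 1
        omega
    rw [hlist]
    have hp1 : pathEnd g p.1 ((List.ofFn fun i : Fin K => p.2 i) ++ L) = q.1 := by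
      rw [pathEnd, List.foldl_append, ← pathEnd, ← pathEnd, hL]
    have hp2 : (fun k => m' (k + (K + L.length))) = q.2 := by
      funext k
      simp only [hm']
      rw [dif_neg (by omega), dif_neg (by omega)]
      have h3 : k + (K + L.length) - K - L.length = k := by omega
      rw [h3]
    rw [hp1, hp2]
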